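/- Let f(u,v) be a smooth germ at 0 with quadratic part (s/2)(μ²u² - 2λμuv + λ²v²), s ≠ 0, λ ≠ 0. Suppose the cubic part c₃ satisfies c₃(λ,μ) = 0. After the substitution v ↦ v + (μ/λ)u - c u² with c = (∂c₃/∂v)(λ,μ)/(sλ⁴), the coefficient of u²v in the transformed function vanishes, the coefficient of v² is sλ²/2, and the coefficient of u⁴ equals (1/λ⁴)·( c₄(λ,μ) - (1/(2sλ²))·((∂c₃/∂v)(λ,μ))² ), where c₄ is the quartic part of f. -/

import Mathlib

noncomputable section

/-- Partial derivative in the first variable. -/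
def pdu (f : ℝ × ℝ → ℝ) (p : ℝ × ℝ) : ℝ := fderiv ℝ f p (1, 0)

/-- Partial derivative in the second variable. -/
def pdv (f : ℝ × ℝ → ℝ) (p : ℝ × ℝ) : ℝ := fderiv ℝ f p (0, 1)

/-- The binary cubic with coefficients `c30, c21, c12, c03`. -/
def cubic (c30 c21 c12 c03 : ℝ) (u v : ℝ) : ℝ :=
  c30/6 * u^3 + c21/2 * u^2 * v + c12/2 * u * v^2 + c03/6 * v^3

/-- The binary quartic with coefficients `c40, c31, c22, c13, c04`. -/
def quartic (c40 c31 c22 c13 c04 : ℝ) (u v : ℝ) : ℝ :=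
  c40/24 * u^4 + c31/6 * u^3 * v + c22/4 * u^2 * v^2 + c13/6 * u * v^3 + c04/24 * v^4

lemma le_top_helper : ((⊤:ℕ∞) : WithTop ℕ∞) + 1 ≤ ((⊤:ℕ∞) : WithTop ℕ∞) := by
  exact_mod_cast le_top

lemma one_le_helper : (1 : WithTop ℕ∞) ≤ ((⊤:ℕ∞) : WithTop ℕ∞) := by
  exact_mod_cast le_top

def phi (a c : ℝ) (p : ℝ × ℝ) : ℝ × ℝ := (p.1, p.2 + a * p.1 - c * p.1 ^ 2)

lemma contDiff_phi (a c : ℝ) : ContDiff ℝ (⊤ : ℕ∞) (phi a c) := by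
  unfold phi; fun_prop

lemma hasFDerivAt_phi (a c : ℝ) (p : ℝ × ℝ) :
    HasFDerivAt (phi a c)
      ((ContinuousLinearMap.fst ℝ ℝ ℝ).prod
        ((ContinuousLinearMap.snd ℝ ℝ ℝ) + (a - 2*c*p.1) • (ContinuousLinearMap.fst ℝ ℝ ℝ))) p := by
  have h1 : HasFDerivAt (fun p : ℝ × ℝ => p.1) (ContinuousLinearMap.fst ℝ ℝ ℝ) p :=
    hasFDerivAt_fst
  have h2 : HasFDerivAt (fun p : ℝ × ℝ => p.2 + a * p.1 - c * p.1 ^ 2)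
      ((ContinuousLinearMap.snd ℝ ℝ ℝ) + (a - 2*c*p.1) • (ContinuousLinearMap.fst ℝ ℝ ℝ)) p := by
    simp only [pow_two]
    have hfst : HasFDerivAt (fun q : ℝ × ℝ => q.1) (ContinuousLinearMap.fst ℝ ℝ ℝ) p :=
      hasFDerivAt_fst
    have hsnd : HasFDerivAt (fun q : ℝ × ℝ => q.2) (ContinuousLinearMap.snd ℝ ℝ ℝ) p :=
      hasFDerivAt_snd
    have := (hsnd.add (hfst.const_mul a)).sub ((hfst.mul hfst).const_mul c)
    convert this using 1 <;> try rfl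
    ext v <;> simp <;> ring
  exact h1.prodMk h2

lemma contDiff_pdu {f : ℝ × ℝ → ℝ} (hf : ContDiff ℝ (⊤ : ℕ∞) f) : ContDiff ℝ (⊤ : ℕ∞) (pdu f) := by
  unfold pdu
  exact (hf.fderiv_right (le_top_helper)).clm_apply contDiff_const

lemma contDiff_pdv {f : ℝ × ℝ → ℝ} (hf : ContDiff ℝ (⊤ : ℕ∞) f) : ContDiff ℝ (⊤ : ℕ∞) (pdv f) := by
  unfold pdv
  exact (hf.fderiv_right (le_top_helper)).clm_apply contDiff_const

lemma pdu_comp (a c : ℝ) {F : ℝ × ℝ → ℝ} (hF : Differentiable ℝ F) :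
    pdu (fun q => F (phi a c q)) =
      fun p => pdu F (phi a c p) + (a - 2*c*p.1) * pdv F (phi a c p) := by
  funext p
  rw [show (fun q => F (phi a c q)) = F ∘ phi a c from rfl]
  have hc := ((hF (phi a c p)).hasFDerivAt).comp p (hasFDerivAt_phi a c p)
  unfold pdu pdv
  rw [hc.fderiv]
  have e : ((ContinuousLinearMap.fst ℝ ℝ ℝ).prod
      ((ContinuousLinearMap.snd ℝ ℝ ℝ) + (a - 2*c*p.1) • (ContinuousLinearMap.fst ℝ ℝ ℝ)))
      ((1:ℝ), (0:ℝ)) = (1, a - 2*c*p.1) := by simp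
  rw [ContinuousLinearMap.comp_apply, e]
  have e2 : ((1:ℝ), a - 2*c*p.1) = ((1:ℝ),(0:ℝ)) + (a - 2*c*p.1) • ((0:ℝ),(1:ℝ)) := by
    simp
  rw [e2, map_add, map_smul, smul_eq_mul]

lemma pdv_comp (a c : ℝ) {F : ℝ × ℝ → ℝ} (hF : Differentiable ℝ F) :
    pdv (fun q => F (phi a c q)) = fun p => pdv F (phi a c p) := by
  funext p
  rw [show (fun q => F (phi a c q)) = F ∘ phi a c from rfl]
  have hc := ((hF (phi a c p)).hasFDerivAt).comp p (hasFDerivAt_phi a c p)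
  unfold pdv
  rw [hc.fderiv]
  have e : ((ContinuousLinearMap.fst ℝ ℝ ℝ).prod
      ((ContinuousLinearMap.snd ℝ ℝ ℝ) + (a - 2*c*p.1) • (ContinuousLinearMap.fst ℝ ℝ ℝ)))
      ((0:ℝ), (1:ℝ)) = (0, 1) := by simp
  rw [ContinuousLinearMap.comp_apply, e]

lemma pdu_add {g h : ℝ × ℝ → ℝ} {p} (hg : DifferentiableAt ℝ g p) (hh : DifferentiableAt ℝ h p) :
    pdu (fun q => g q + h q) p = pdu g p + pdu h p := by
  unfold pdu; rw [fderiv_fun_add hg hh]; simp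

lemma pdv_add {g h : ℝ × ℝ → ℝ} {p} (hg : DifferentiableAt ℝ g p) (hh : DifferentiableAt ℝ h p) :
    pdv (fun q => g q + h q) p = pdv g p + pdv h p := by
  unfold pdv; rw [fderiv_fun_add hg hh]; simp

lemma pdu_mul {g h : ℝ × ℝ → ℝ} {p} (hg : DifferentiableAt ℝ g p) (hh : DifferentiableAt ℝ h p) :
    pdu (fun q => g q * h q) p = pdu g p * h p + g p * pdu h p := by
  unfold pdu; rw [fderiv_fun_mul hg hh]; simp; ring

lemma pdv_mul {g h : ℝ × ℝ → ℝ} {p} (hg : DifferentiableAt ℝ g p) (hh : DifferentiableAt ℝ h p) :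
    pdv (fun q => g q * h q) p = pdv g p * h p + g p * pdv h p := by
  unfold pdv; rw [fderiv_fun_mul hg hh]; simp; ring

lemma pdu_cmul {h : ℝ × ℝ → ℝ} {p} (k : ℝ) (hh : DifferentiableAt ℝ h p) :
    pdu (fun q => k * h q) p = k * pdu h p := by
  unfold pdu; rw [fderiv_const_mul hh]; simp

lemma pdv_cmul {h : ℝ × ℝ → ℝ} {p} (k : ℝ) (hh : DifferentiableAt ℝ h p) :
    pdv (fun q => k * h q) p = k * pdv h p := by
  unfold pdv; rw [fderiv_const_mul hh]; simp

lemma pdu_w (a c : ℝ) (p : ℝ × ℝ) : pdu (fun q : ℝ × ℝ => a - 2*c*q.1) p = -(2*c) := by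
  unfold pdu
  have h : HasFDerivAt (fun q : ℝ × ℝ => a - 2*c*q.1)
      (-( (2*c) • (ContinuousLinearMap.fst ℝ ℝ ℝ))) p := by
    have hfst : HasFDerivAt (fun q : ℝ × ℝ => q.1) (ContinuousLinearMap.fst ℝ ℝ ℝ) p :=
      hasFDerivAt_fst
    have := (hasFDerivAt_const a p).sub (hfst.const_mul (2*c))
    convert this using 1 <;> try rfl
    ext v <;> simp
  rw [h.fderiv]; simp

lemma pdv_w (a c : ℝ) (p : ℝ × ℝ) : pdv (fun q : ℝ × ℝ => a - 2*c*q.1) p = 0 := by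
  unfold pdv
  have h : HasFDerivAt (fun q : ℝ × ℝ => a - 2*c*q.1)
      (-( (2*c) • (ContinuousLinearMap.fst ℝ ℝ ℝ))) p := by
    have hfst : HasFDerivAt (fun q : ℝ × ℝ => q.1) (ContinuousLinearMap.fst ℝ ℝ ℝ) p :=
      hasFDerivAt_fst
    have := (hasFDerivAt_const a p).sub (hfst.const_mul (2*c))
    convert this using 1 <;> try rfl
    ext v <;> simp
  rw [h.fderiv]; simp

lemma pdu_pdv_comm {f : ℝ × ℝ → ℝ} (hf : ContDiff ℝ (⊤ : ℕ∞) f) :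
    pdu (pdv f) = pdv (pdu f) := by
  funext p
  have hdf : Differentiable ℝ (fderiv ℝ f) :=
    (hf.fderiv_right (le_top_helper)).differentiable (by simp)
  have hsymm := second_derivative_symmetric (f := f) (f' := fderiv ℝ f)
    (f'' := fderiv ℝ (fderiv ℝ f) p)
    (fun y => (hf.differentiable (by simp) y).hasFDerivAt) (hdf p).hasFDerivAt
  have key : ∀ v w : ℝ × ℝ, fderiv ℝ (fun q => fderiv ℝ f q v) p w
      = fderiv ℝ (fderiv ℝ f) p w v := by
    intro v w
    have h2 : fderiv ℝ (fun q => fderiv ℝ f q v) p = (fderiv ℝ (fderiv ℝ f) p).flip v := by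
      simpa using fderiv_clm_apply (𝕜 := ℝ) (c := fderiv ℝ f) (u := fun _ => v) (x := p)
        (hdf p) (differentiableAt_const v)
    rw [h2]
    simp
  unfold pdu pdv
  rw [key, key, hsymm]

lemma diff_comp (a c : ℝ) {H : ℝ × ℝ → ℝ} (hH : ContDiff ℝ (⊤ : ℕ∞) H) :
    Differentiable ℝ (fun q => H (phi a c q)) :=
  (hH.comp (contDiff_phi a c)).differentiable (by simp)

lemma pdu_P {P P' : ℝ → ℝ} (hP : ∀ x, HasDerivAt P (P' x) x) (p : ℝ × ℝ) :
    pdu (fun q : ℝ × ℝ => P q.1) p = P' p.1 := by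
  unfold pdu
  have h : HasFDerivAt (fun q : ℝ × ℝ => P q.1)
      ((P' p.1) • (ContinuousLinearMap.fst ℝ ℝ ℝ)) p := by
    have hfst : HasFDerivAt (fun q : ℝ × ℝ => q.1) (ContinuousLinearMap.fst ℝ ℝ ℝ) p :=
      hasFDerivAt_fst
    exact (hP p.1).comp_hasFDerivAt p hfst
  rw [h.fderiv]; simp

lemma pdv_P {P P' : ℝ → ℝ} (hP : ∀ x, HasDerivAt P (P' x) x) (p : ℝ × ℝ) :
    pdv (fun q : ℝ × ℝ => P q.1) p = 0 := by
  unfold pdv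
  have h : HasFDerivAt (fun q : ℝ × ℝ => P q.1)
      ((P' p.1) • (ContinuousLinearMap.fst ℝ ℝ ℝ)) p := by
    have hfst : HasFDerivAt (fun q : ℝ × ℝ => q.1) (ContinuousLinearMap.fst ℝ ℝ ℝ) p :=
      hasFDerivAt_fst
    exact (hP p.1).comp_hasFDerivAt p hfst
  rw [h.fderiv]; simp

lemma diff_P {P P' : ℝ → ℝ} (hP : ∀ x, HasDerivAt P (P' x) x) :
    Differentiable ℝ (fun q : ℝ × ℝ => P q.1) := by
  intro p
  exact ((hP p.1).differentiableAt.comp p differentiableAt_fst)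

lemma pdu_poly_comp (a c : ℝ) {P P' : ℝ → ℝ} (hP : ∀ x, HasDerivAt P (P' x) x)
    {H : ℝ × ℝ → ℝ} (hH : ContDiff ℝ (⊤ : ℕ∞) H) :
    pdu (fun q => P q.1 * H (phi a c q)) = fun p =>
      P' p.1 * H (phi a c p)
        + P p.1 * (pdu H (phi a c p) + (a - 2*c*p.1) * pdv H (phi a c p)) := by
  funext p
  refine (pdu_mul (g := fun q : ℝ × ℝ => P q.1) (h := fun q => H (phi a c q))
    (diff_P hP p) (diff_comp a c hH p)).trans ?_
  rw [pdu_P hP p, congrFun (pdu_comp a c (hH.differentiable (by simp))) p]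

lemma pdv_poly_comp (a c : ℝ) {P P' : ℝ → ℝ} (hP : ∀ x, HasDerivAt P (P' x) x)
    {H : ℝ × ℝ → ℝ} (hH : ContDiff ℝ (⊤ : ℕ∞) H) :
    pdv (fun q => P q.1 * H (phi a c q)) = fun p => P p.1 * pdv H (phi a c p) := by
  funext p
  refine (pdv_mul (g := fun q : ℝ × ℝ => P q.1) (h := fun q => H (phi a c q))
    (diff_P hP p) (diff_comp a c hH p)).trans ?_
  rw [pdv_P hP p, congrFun (pdv_comp a c (hH.differentiable (by simp))) p]
  ring

lemma pdu_add2 {A B : ℝ × ℝ → ℝ} (hA : Differentiable ℝ A) (hB : Differentiable ℝ B) :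
    pdu (fun q => A q + B q) = fun p => pdu A p + pdu B p :=
  funext fun p => pdu_add (hA p) (hB p)

lemma pdu_add4 {A B C D : ℝ × ℝ → ℝ} (hA : Differentiable ℝ A) (hB : Differentiable ℝ B)
    (hC : Differentiable ℝ C) (hD : Differentiable ℝ D) :
    pdu (fun q => A q + B q + C q + D q) = fun p => pdu A p + pdu B p + pdu C p + pdu D p := by
  funext p
  rw [pdu_add (g := fun q => A q + B q + C q) (h := D) (((hA.add hB).add hC) p) (hD p),
    pdu_add (g := fun q => A q + B q) (h := C) ((hA.add hB) p) (hC p),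
    pdu_add (hA p) (hB p)]

lemma pdv_add4 {A B C D : ℝ × ℝ → ℝ} (hA : Differentiable ℝ A) (hB : Differentiable ℝ B)
    (hC : Differentiable ℝ C) (hD : Differentiable ℝ D) :
    pdv (fun q => A q + B q + C q + D q) = fun p => pdv A p + pdv B p + pdv C p + pdv D p := by
  funext p
  rw [pdv_add (g := fun q => A q + B q + C q) (h := D) (((hA.add hB).add hC) p) (hD p),
    pdv_add (g := fun q => A q + B q) (h := C) ((hA.add hB) p) (hC p),
    pdv_add (hA p) (hB p)]

lemma pdu_add6 {A B C D E F : ℝ × ℝ → ℝ} (hA : Differentiable ℝ A) (hB : Differentiable ℝ B)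
    (hC : Differentiable ℝ C) (hD : Differentiable ℝ D) (hE : Differentiable ℝ E)
    (hF : Differentiable ℝ F) :
    pdu (fun q => A q + B q + C q + D q + E q + F q) =
      fun p => pdu A p + pdu B p + pdu C p + pdu D p + pdu E p + pdu F p := by
  funext p
  rw [pdu_add (g := fun q => A q + B q + C q + D q + E q) (h := F)
      (((((hA.add hB).add hC).add hD).add hE) p) (hF p),
    pdu_add (g := fun q => A q + B q + C q + D q) (h := E)
      ((((hA.add hB).add hC).add hD) p) (hE p),
    pdu_add (g := fun q => A q + B q + C q) (h := D) (((hA.add hB).add hC) p) (hD p),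
    pdu_add (g := fun q => A q + B q) (h := C) ((hA.add hB) p) (hC p),
    pdu_add (hA p) (hB p)]

lemma hw (a c : ℝ) : ∀ x : ℝ, HasDerivAt (fun y => a - 2*c*y) (-(2*c)) x := by
  intro x
  have := (hasDerivAt_const x a).sub ((hasDerivAt_id x).const_mul (2*c))
  convert this using 1 <;> first | rfl | ring

lemma hkw (k a c : ℝ) : ∀ x : ℝ, HasDerivAt (fun y => k*(a - 2*c*y)) (k*(-(2*c))) x :=
  fun x => (hw a c x).const_mul k

lemma hw2 (a c : ℝ) : ∀ x : ℝ, HasDerivAt (fun y => (a - 2*c*y)^2)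
    (-(4*c)*(a - 2*c*x)) x := by
  intro x
  have := (hw a c x).fun_pow 2
  convert this using 1 <;> try rfl
  push_cast
  ring

lemma hkw2 (k a c : ℝ) : ∀ x : ℝ, HasDerivAt (fun y => k*(a - 2*c*y)^2)
    (k*(-(4*c)*(a - 2*c*x))) x :=
  fun x => (hw2 a c x).const_mul k

lemma hw3 (a c : ℝ) : ∀ x : ℝ, HasDerivAt (fun y => (a - 2*c*y)^3)
    (-(6*c)*(a - 2*c*x)^2) x := by
  intro x
  have := (hw a c x).fun_pow 3
  convert this using 1 <;> try rfl
  push_cast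
  ring

lemma hconst (k : ℝ) : ∀ x : ℝ, HasDerivAt (fun _ : ℝ => k) 0 x :=
  fun x => hasDerivAt_const x k

lemma phi_zero (a c : ℝ) : phi a c 0 = 0 := by
  simp [phi, Prod.ext_iff]

set_option maxHeartbeats 2000000 in
/-- For a smooth germ `f` with quadratic part `(s/2)(μ²u² - 2λμuv + λ²v²)`, `s ≠ 0`,
`λ ≠ 0`, and cubic part `c₃` with `c₃(λ,μ) = 0`: after the substitution
`v ↦ v + (μ/λ)u - cu²` with `c = (∂c₃/∂v)(λ,μ)/(sλ⁴)`, the coefficient of `u²v`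
vanishes, that of `v²` is `sλ²/2`, and that of `u⁴` equals
`(1/λ⁴)(c₄(λ,μ) - (1/(2sλ²))((∂c₃/∂v)(λ,μ))²)`. -/
theorem stmt4 (f : ℝ × ℝ → ℝ) (hf : ContDiff ℝ (⊤ : ℕ∞) f)
    (s l m : ℝ) (hs : s ≠ 0) (hl : l ≠ 0)
    (c30 c21 c12 c03 c40 c31 c22 c13 c04 : ℝ)
    (h00 : f 0 = 0) (h10 : pdu f 0 = 0) (h01 : pdv f 0 = 0)
    (h20 : pdu (pdu f) 0 = s * m ^ 2)
    (h11 : pdv (pdu f) 0 = -(s * l * m))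
    (h02 : pdv (pdv f) 0 = s * l ^ 2)
    (h30 : pdu (pdu (pdu f)) 0 = c30)
    (h21 : pdv (pdu (pdu f)) 0 = c21)
    (h12 : pdv (pdv (pdu f)) 0 = c12)
    (h03 : pdv (pdv (pdv f)) 0 = c03)
    (h40 : pdu (pdu (pdu (pdu f))) 0 = c40)
    (h31 : pdv (pdu (pdu (pdu f))) 0 = c31)
    (h22 : pdv (pdv (pdu (pdu f))) 0 = c22)
    (h13 : pdv (pdv (pdv (pdu f))) 0 = c13)
    (h04 : pdv (pdv (pdv (pdv f))) 0 = c04)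
    (hc3 : cubic c30 c21 c12 c03 l m = 0)
    (c3v : ℝ) (hc3v : c3v = deriv (fun y => cubic c30 c21 c12 c03 l y) m)
    (c : ℝ) (hc : c = c3v / (s * l ^ 4)) :
    pdv (pdu (pdu (fun p : ℝ × ℝ => f (p.1, p.2 + (m / l) * p.1 - c * p.1 ^ 2)))) 0 = 0 ∧
    pdv (pdv (fun p : ℝ × ℝ => f (p.1, p.2 + (m / l) * p.1 - c * p.1 ^ 2))) 0 = s * l ^ 2 ∧
    pdu (pdu (pdu (pdu (fun p : ℝ × ℝ =>
        f (p.1, p.2 + (m / l) * p.1 - c * p.1 ^ 2))))) 0 =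
      24 * ((1 / l ^ 4) *
        (quartic c40 c31 c22 c13 c04 l m - 1 / (2 * s * l ^ 2) * c3v ^ 2)) := by
  set a := m / l with ha
  have hfd : Differentiable ℝ f := hf.differentiable (by simp)
  have hu : ContDiff ℝ (⊤:ℕ∞) (pdu f) := contDiff_pdu hf
  have hv : ContDiff ℝ (⊤:ℕ∞) (pdv f) := contDiff_pdv hf
  have huu : ContDiff ℝ (⊤:ℕ∞) (pdu (pdu f)) := contDiff_pdu hu
  have huv : ContDiff ℝ (⊤:ℕ∞) (pdv (pdu f)) := contDiff_pdv hu
  have hvv : ContDiff ℝ (⊤:ℕ∞) (pdv (pdv f)) := contDiff_pdv hv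
  have huuu : ContDiff ℝ (⊤:ℕ∞) (pdu (pdu (pdu f))) := contDiff_pdu huu
  have huuv : ContDiff ℝ (⊤:ℕ∞) (pdv (pdu (pdu f))) := contDiff_pdv huu
  have huvv : ContDiff ℝ (⊤:ℕ∞) (pdv (pdv (pdu f))) := contDiff_pdv huv
  have hvvv : ContDiff ℝ (⊤:ℕ∞) (pdv (pdv (pdv f))) := contDiff_pdv hvv
  have S1 : pdu (pdv f) = pdv (pdu f) := pdu_pdv_comm hf
  have S2 : pdu (pdv (pdu f)) = pdv (pdu (pdu f)) := pdu_pdv_comm hu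
  have S3 : pdu (pdv (pdv f)) = pdv (pdv (pdu f)) :=
    (pdu_pdv_comm hv).trans (congrArg pdv S1)
  have S4 : pdu (pdv (pdu (pdu f))) = pdv (pdu (pdu (pdu f))) := pdu_pdv_comm huu
  have S5 : pdu (pdv (pdv (pdu f))) = pdv (pdv (pdu (pdu f))) :=
    (pdu_pdv_comm huv).trans (congrArg pdv S2)
  have S6 : pdu (pdv (pdv (pdv f))) = pdv (pdv (pdv (pdu f))) :=
    (pdu_pdv_comm hvv).trans (congrArg pdv S3)
  have hv3 : c3v = c21/2*l^2 + c12*l*m + c03/2*m^2 := by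
    have hd : HasDerivAt (fun y : ℝ => c30/6*l^3 + c21/2*l^2*y + c12/2*l*y^2 + c03/6*y^3)
        (c21/2*l^2 + c12*l*m + c03/2*m^2) m := by
      have h := (((hasDerivAt_const m (c30/6*l^3)).add
          ((hasDerivAt_id m).const_mul (c21/2*l^2))).add
          ((hasDerivAt_pow 2 m).const_mul (c12/2*l))).add
          ((hasDerivAt_pow 3 m).const_mul (c03/6))
      convert h using 1 <;> try rfl
      push_cast
      ring
    rw [hc3v, show (fun y => cubic c30 c21 c12 c03 l y)
      = (fun y : ℝ => c30/6*l^3 + c21/2*l^2*y + c12/2*l*y^2 + c03/6*y^3) from rfl, hd.deriv]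
  have E1 : pdu (fun q => f (phi a c q))
      = fun p => pdu f (phi a c p) + (a - 2*c*p.1) * pdv f (phi a c p) := pdu_comp a c hfd
  have E2 : pdu (pdu (fun q => f (phi a c q))) = fun p =>
      pdu (pdu f) (phi a c p)
      + (2*(a - 2*c*p.1)) * pdv (pdu f) (phi a c p)
      + ((a - 2*c*p.1)^2) * pdv (pdv f) (phi a c p)
      + (-(2*c)) * pdv f (phi a c p) := by
    rw [E1]
    simp only [pdu_add2 (diff_comp a c hu) ((diff_P (hw a c)).fun_mul (diff_comp a c hv)),
      pdu_comp a c (hu.differentiable (by simp)),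
      pdu_poly_comp a c (hw a c) hv, S1]
    funext p; ring
  have E3 : pdu (pdu (pdu (fun q => f (phi a c q)))) = fun p =>
      pdu (pdu (pdu f)) (phi a c p)
      + (3*(a - 2*c*p.1)) * pdv (pdu (pdu f)) (phi a c p)
      + (3*(a - 2*c*p.1)^2) * pdv (pdv (pdu f)) (phi a c p)
      + ((a - 2*c*p.1)^3) * pdv (pdv (pdv f)) (phi a c p)
      + (-(6*c)) * pdv (pdu f) (phi a c p)
      + (-(6*c)*(a - 2*c*p.1)) * pdv (pdv f) (phi a c p) := by
    rw [E2]
    simp only [pdu_add4 (diff_comp a c huu)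
        ((diff_P (hkw 2 a c)).fun_mul (diff_comp a c huv))
        ((diff_P (hw2 a c)).fun_mul (diff_comp a c hvv))
        ((diff_P (hconst (-(2*c)))).fun_mul (diff_comp a c hv)),
      pdu_comp a c (huu.differentiable (by simp)),
      pdu_poly_comp a c (hkw 2 a c) huv,
      pdu_poly_comp a c (hw2 a c) hvv,
      pdu_poly_comp a c (hconst (-(2*c))) hv, S1, S2, S3]
    funext p; ring
  refine ⟨?_, ?_, ?_⟩
  · show pdv (pdu (pdu (fun q => f (phi a c q)))) 0 = 0
    rw [E2]
    simp only [pdv_add4 (diff_comp a c huu)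
        ((diff_P (hkw 2 a c)).fun_mul (diff_comp a c huv))
        ((diff_P (hw2 a c)).fun_mul (diff_comp a c hvv))
        ((diff_P (hconst (-(2*c)))).fun_mul (diff_comp a c hv)),
      pdv_comp a c (huu.differentiable (by simp)),
      pdv_poly_comp a c (hkw 2 a c) huv,
      pdv_poly_comp a c (hw2 a c) hvv,
      pdv_poly_comp a c (hconst (-(2*c))) hv,
      phi_zero, Prod.fst_zero]
    simp only [h21, h12, h03, h02]
    rw [hc, hv3, ha]
    field_simp
    ring
  · show pdv (pdv (fun q => f (phi a c q))) 0 = s * l ^ 2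
    rw [pdv_comp a c hfd, pdv_comp a c (hv.differentiable (by simp))]
    simp only [phi_zero]
    exact h02
  · show pdu (pdu (pdu (pdu (fun q => f (phi a c q))))) 0
      = 24 * ((1 / l ^ 4) * (quartic c40 c31 c22 c13 c04 l m - 1 / (2 * s * l ^ 2) * c3v ^ 2))
    rw [E3]
    simp only [pdu_add6 (diff_comp a c huuu)
        ((diff_P (hkw 3 a c)).fun_mul (diff_comp a c huuv))
        ((diff_P (hkw2 3 a c)).fun_mul (diff_comp a c huvv))
        ((diff_P (hw3 a c)).fun_mul (diff_comp a c hvvv))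
        ((diff_P (hconst (-(6*c)))).fun_mul (diff_comp a c huv))
        ((diff_P (hkw (-(6*c)) a c)).fun_mul (diff_comp a c hvv)),
      pdu_comp a c (huuu.differentiable (by simp)),
      pdu_poly_comp a c (hkw 3 a c) huuv,
      pdu_poly_comp a c (hkw2 3 a c) huvv,
      pdu_poly_comp a c (hw3 a c) hvvv,
      pdu_poly_comp a c (hconst (-(6*c))) huv,
      pdu_poly_comp a c (hkw (-(6*c)) a c) hvv,
      S1, S2, S3, S4, S5, S6, phi_zero, Prod.fst_zero]
    simp only [h40, h31, h22, h13, h04, h30, h21, h12, h03, h20, h11, h02, h10, h01, quartic]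
    rw [hc, hv3, ha]
    field_simp
    ring
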